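/- arXiv:2009.02712 — 2 statements merged into one kernel-verified Lean document; each statement's English description precedes it below -/
import Mathlib

section
/- Let λ > 0 and t₀ ≥ 2. Then for every ρ ∈ (0, 1), the function f₁(ρ) = 1/(λ t₀^ρ Γ(1−ρ)) is differentiable at ρ and its derivative satisfies f₁'(ρ) ≤ −1/(λ t₀^ρ). -/
open Set Real

lemma gamma_add_one_le_one {x : ℝ} (hx : 0 < x) (hx1 : x < 1) :
    Real.Gamma (x + 1) ≤ 1 := by
  have h := convexOn_Gamma.2 (mem_Ioi.mpr one_pos) (mem_Ioi.mpr two_pos)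
    (by linarith : (0:ℝ) ≤ 1 - x) hx.le (by ring : (1 - x) + x = 1)
  simp only [smul_eq_mul, Real.Gamma_one, Real.Gamma_two, mul_one] at h
  calc Real.Gamma (x + 1) = Real.Gamma (1 - x + x * 2) := by ring_nf
    _ ≤ (1-x) + x := by simpa using h
    _ = 1 := by ring

lemma psi_add_gamma_le {x : ℝ} (hx : 0 < x) (hx1 : x < 1) :
    deriv Real.Gamma x / Real.Gamma x + Real.Gamma x ≤ Real.log 2 := by
  set f := Real.log ∘ Real.Gamma with hf
  have hc : ConvexOn ℝ (Ioi 0) f := convexOn_log_Gamma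
  have h_rec (y : ℝ) (hy : 0 < y) : f (y + 1) = f y + Real.log y := by
    simp only [hf, Function.comp_apply, Real.Gamma_add_one hy.ne',
      Real.log_mul hy.ne' (Real.Gamma_pos_of_pos hy).ne', add_comm]
  have hder {y : ℝ} (hy : 0 < y) : DifferentiableAt ℝ f y := by
    refine ((Real.differentiableAt_Gamma ?_).log (Real.Gamma_ne_zero ?_)) <;>
      exact fun m ↦ ne_of_gt (by have := m.cast_nonneg (α := ℝ); linarith)
  have hder_rec : deriv f (x + 1) = deriv f x + 1 / x := by
    rw [← deriv_comp_add_const, one_div, ← Real.deriv_log,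
      ← deriv_add (hder hx) (Real.differentiableAt_log hx.ne')]
    apply Filter.EventuallyEq.deriv_eq
    filter_upwards [eventually_gt_nhds hx] using h_rec
  have htan : deriv f (x + 1) ≤ Real.log (x + 1) := by
    have := hc.deriv_le_slope (mem_Ioi.mpr (by linarith : (0:ℝ) < x + 1))
      (mem_Ioi.mpr (by linarith : (0:ℝ) < x + 2)) (by linarith) (hder (by linarith))
    refine this.trans (le_of_eq ?_)
    rw [slope_def_field, show x + 2 - (x + 1) = (1:ℝ) by ring, div_one,
      show x + 2 = (x + 1) + 1 by ring, h_rec (x+1) (by linarith), add_sub_cancel_left]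
  have hψ : deriv f x = deriv Real.Gamma x / Real.Gamma x := by
    have hdg : DifferentiableAt ℝ Real.Gamma x :=
      Real.differentiableAt_Gamma fun m ↦ ne_of_gt (by have := m.cast_nonneg (α := ℝ); linarith)
    have hne : Real.Gamma x ≠ 0 := (Real.Gamma_pos_of_pos hx).ne'
    rw [hf, Function.comp_def, deriv.log hdg hne]
  have hG : Real.Gamma x = Real.Gamma (x + 1) / x := by
    rw [Real.Gamma_add_one hx.ne', mul_div_cancel_left₀ _ hx.ne']
  have hG1 : Real.Gamma (x + 1) ≤ 1 := gamma_add_one_le_one hx hx1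
  have hlog : Real.log (x + 1) ≤ Real.log 2 :=
    Real.log_le_log (by linarith) (by linarith)
  have h1 : deriv Real.Gamma x / Real.Gamma x = deriv f (x + 1) - 1 / x := by
    rw [hder_rec, hψ]; ring
  have h2 : Real.Gamma x ≤ 1 / x := by
    rw [hG]; gcongr
  linarith


/-- For `λ > 0` and `t₀ ≥ 2`, the function `f₁(ρ) = 1/(λ t₀^ρ Γ(1−ρ))` is differentiable
at every `ρ ∈ (0, 1)` with `f₁'(ρ) ≤ −1/(λ t₀^ρ)`. -/
theorem stmt8 (lam t₀ : ℝ) (hlam : 0 < lam) (ht₀ : 2 ≤ t₀) :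
    ∀ ρ ∈ Set.Ioo (0 : ℝ) 1,
      DifferentiableAt ℝ (fun ρ : ℝ => 1 / (lam * t₀ ^ ρ * Real.Gamma (1 - ρ))) ρ ∧
      deriv (fun ρ : ℝ => 1 / (lam * t₀ ^ ρ * Real.Gamma (1 - ρ))) ρ ≤
        -1 / (lam * t₀ ^ ρ) := by
  rintro ρ ⟨h0, h1⟩
  have ht₀0 : (0:ℝ) < t₀ := by linarith
  have hx : 0 < 1 - ρ := by linarith
  have hx1 : 1 - ρ < 1 := by linarith
  set G := Real.Gamma (1 - ρ) with hGdef
  have hGpos : 0 < G := Real.Gamma_pos_of_pos hx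
  have hdg : DifferentiableAt ℝ Real.Gamma (1 - ρ) :=
    Real.differentiableAt_Gamma fun m ↦ ne_of_gt (by have := m.cast_nonneg (α := ℝ); linarith)
  set dG := deriv Real.Gamma (1 - ρ) with hdGdef
  have hGc : HasDerivAt (fun ρ : ℝ => Real.Gamma (1 - ρ)) (dG * -1) ρ :=
    HasDerivAt.comp ρ hdg.hasDerivAt ((hasDerivAt_id ρ).const_sub 1)
  have hpow : HasDerivAt (fun ρ : ℝ => t₀ ^ ρ) (t₀ ^ ρ * Real.log t₀) ρ :=
    (Real.hasStrictDerivAt_const_rpow ht₀0 ρ).hasDerivAt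
  have hd : HasDerivAt (fun ρ : ℝ => lam * t₀ ^ ρ * Real.Gamma (1 - ρ))
      (lam * (t₀ ^ ρ * Real.log t₀) * G + lam * t₀ ^ ρ * (dG * -1)) ρ :=
    (hpow.const_mul lam).mul hGc
  have hApos : 0 < lam * t₀ ^ ρ := mul_pos hlam (Real.rpow_pos_of_pos ht₀0 ρ)
  have hdenpos : 0 < lam * t₀ ^ ρ * G := mul_pos hApos hGpos
  have hinv : HasDerivAt (fun ρ : ℝ => 1 / (lam * t₀ ^ ρ * Real.Gamma (1 - ρ)))
      (-(lam * (t₀ ^ ρ * Real.log t₀) * G + lam * t₀ ^ ρ * (dG * -1)) /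
        (lam * t₀ ^ ρ * G) ^ 2) ρ := by
    have := hd.inv hdenpos.ne'
    simp only [one_div]
    exact this
  refine ⟨hinv.differentiableAt, ?_⟩
  rw [hinv.deriv]
  have hkey : dG / G + G ≤ Real.log t₀ :=
    (psi_add_gamma_le hx hx1).trans (Real.log_le_log two_pos ht₀)
  have hkey' := mul_le_mul_of_nonneg_right hkey hGpos.le
  rw [add_mul, div_mul_cancel₀ _ hGpos.ne'] at hkey'
  rw [div_le_div_iff₀ (by positivity) hApos]
  nlinarith [mul_le_mul_of_nonneg_left hkey' (sq_nonneg (lam * t₀ ^ ρ)),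
    sq_nonneg (lam * t₀ ^ ρ), mul_pos hApos hApos]
end

section
/- Let ρ ∈ (0, 1), σ₀ ∈ (0, 1), t₀ > 1, and let λ₁ > 1 satisfy λ₁^{σ₀} ≥ 5 Γ(1−ρ). Then for every σ ∈ [σ₀, 1) the following two-sided estimate holds: E_ρ(−λ₁ t₀^ρ) < E_ρ(−λ₁^σ t₀^ρ) < E_ρ(−t₀^ρ). -/
open Set Real

open MeasureTheory Filter Topology intervalIntegral

lemma gamma_conv {ρ x : ℝ} (hρ : 0 < ρ) (hρ1 : ρ ≤ 1) (hx : 0 < x) :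
    Real.Gamma x * x * (x + ρ) ^ (ρ - 1) ≤ Real.Gamma (x + ρ) := by
  have hxρ : (0:ℝ) < x + ρ := by linarith
  have h1 : Real.log (Real.Gamma (x + 1)) ≤
      ρ * Real.log (Real.Gamma (x + ρ)) + (1 - ρ) * Real.log (Real.Gamma (x + ρ + 1)) := by
    have := Real.convexOn_log_Gamma.2 (mem_Ioi.2 hxρ) (mem_Ioi.2 (by linarith : (0:ℝ) < x + ρ + 1))
      (le_of_lt hρ) (by linarith : (0:ℝ) ≤ 1 - ρ) (by ring)
    have he : ρ • (x + ρ) + (1 - ρ) • (x + ρ + 1) = x + 1 := by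
      simp [smul_eq_mul]; ring
    rw [he] at this
    simpa [Function.comp, smul_eq_mul] using this
  have h2 : Real.Gamma (x + ρ + 1) = (x + ρ) * Real.Gamma (x + ρ) := Real.Gamma_add_one (ne_of_gt hxρ)
  have h3 : Real.Gamma (x + 1) = x * Real.Gamma x := Real.Gamma_add_one (ne_of_gt hx)
  have hG1 : 0 < Real.Gamma (x + ρ) := Real.Gamma_pos_of_pos hxρ
  have hGx : 0 < Real.Gamma x := Real.Gamma_pos_of_pos hx
  rw [h2, h3] at h1
  rw [Real.log_mul (ne_of_gt hxρ) (ne_of_gt hG1), Real.log_mul (ne_of_gt hx) (ne_of_gt hGx)] at h1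
  have h4 : Real.log (x * Real.Gamma x) ≤ Real.log (Real.Gamma (x + ρ)) + (1 - ρ) * Real.log (x + ρ) := by
    rw [Real.log_mul (ne_of_gt hx) (ne_of_gt hGx)]; nlinarith [h1]
  have h5 : x * Real.Gamma x ≤ Real.Gamma (x + ρ) * (x + ρ) ^ (1 - ρ) := by
    have := Real.exp_le_exp.2 h4
    rwa [Real.exp_log (by positivity), Real.exp_add, Real.exp_log hG1,
      mul_comm (1-ρ) (Real.log (x+ρ)), ← Real.rpow_def_of_pos hxρ] at this
  have h6 : (0:ℝ) < (x + ρ) ^ (1 - ρ) := Real.rpow_pos_of_pos hxρ _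
  rw [show ρ - 1 = -(1 - ρ) by ring, Real.rpow_neg (le_of_lt hxρ)]
  rw [mul_comm (Real.Gamma x) x]
  calc x * Real.Gamma x * ((x + ρ) ^ (1 - ρ))⁻¹
      ≤ Real.Gamma (x + ρ) * (x + ρ) ^ (1 - ρ) * ((x + ρ) ^ (1 - ρ))⁻¹ := by
        apply mul_le_mul_of_nonneg_right h5 (by positivity)
    _ = Real.Gamma (x + ρ) := by field_simp

lemma summable_gamma_ser {ρ b : ℝ} (hρ : 0 < ρ) (hρ1 : ρ ≤ 1) (hb : 0 < b) {y : ℝ} (hy : 0 ≤ y) :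
    Summable (fun k : ℕ => y ^ k / Real.Gamma (ρ * k + b)) := by
  apply summable_of_ratio_norm_eventually_le (r := 1/2) (by norm_num)
  obtain ⟨K, hK⟩ : ∃ K : ℕ, (1:ℝ) ≤ ρ * K + b ∧ ((4 * y + 1) ^ (1/ρ) : ℝ) ≤ ρ * K + b := by
    obtain ⟨K, hK⟩ := exists_nat_ge ((max 1 ((4*y+1) ^ (1/ρ)) - b)/ρ)
    refine ⟨K, ?_, ?_⟩ <;>
    · rw [div_le_iff₀ hρ] at hK
      have h1 := le_max_left (1:ℝ) ((4*y+1) ^ (1/ρ))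
      have h2 := le_max_right (1:ℝ) ((4*y+1) ^ (1/ρ))
      nlinarith [hK]
  filter_upwards [Filter.eventually_ge_atTop K] with k hk
  set x := ρ * k + b with hxdef
  have hKx : ρ * K + b ≤ x := by
    simp only [hxdef]
    have : (K:ℝ) ≤ k := Nat.cast_le.2 hk
    nlinarith
  have hx1 : (1:ℝ) ≤ x := le_trans hK.1 hKx
  have hx0 : (0:ℝ) < x := by linarith
  have hxρpos : (0:ℝ) < x + ρ := by linarith
  have harg : ρ * ((k+1 : ℕ) : ℝ) + b = x + ρ := by push_cast [hxdef]; ring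
  have hGpos : 0 < Real.Gamma x := Real.Gamma_pos_of_pos hx0
  have hGpos' : 0 < Real.Gamma (x + ρ) := Real.Gamma_pos_of_pos hxρpos
  have hyx : 4 * y ≤ x ^ ρ := by
    have h41 : (0:ℝ) ≤ 4 * y + 1 := by linarith
    have h := Real.rpow_le_rpow (Real.rpow_nonneg h41 _) (le_trans hK.2 hKx) (le_of_lt hρ)
    rw [← Real.rpow_mul h41, one_div, inv_mul_cancel₀ (ne_of_gt hρ), Real.rpow_one] at h
    linarith
  -- key : 2 * y * Γ x ≤ Γ (x + ρ)
  have key : 2 * y * Real.Gamma x ≤ Real.Gamma (x + ρ) := by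
    have hstep : Real.Gamma x * x * (x + ρ) ^ (ρ - 1) ≤ Real.Gamma (x + ρ) :=
      gamma_conv hρ hρ1 hx0
    have h2x : (2 * x) ^ (ρ - 1) ≤ (x + ρ) ^ (ρ - 1) := by
      apply Real.rpow_le_rpow_of_nonpos hxρpos (by linarith) (by linarith)
    have h2r : (2:ℝ) ^ (ρ - 1) * x ^ (ρ - 1) = (2 * x) ^ (ρ - 1) :=
      (Real.mul_rpow (by norm_num) (le_of_lt hx0)).symm
    have h2half : (1/2 : ℝ) ≤ (2:ℝ) ^ (ρ - 1) := by
      have h := Real.rpow_le_rpow_of_exponent_le (by norm_num : (1:ℝ) ≤ 2)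
        (by linarith : (-1:ℝ) ≤ ρ - 1)
      rw [Real.rpow_neg_one] at h
      linarith
    have hxx : x * x ^ (ρ - 1) = x ^ ρ := by
      nth_rewrite 1 [← Real.rpow_one x]
      rw [← Real.rpow_add hx0]
      norm_num
    have e1 : Real.Gamma x * x * (2*x) ^ (ρ-1) ≤ Real.Gamma (x + ρ) :=
      le_trans (mul_le_mul_of_nonneg_left h2x (by positivity)) hstep
    have e2 : Real.Gamma x * x * (2*x) ^ (ρ-1) = Real.Gamma x * (2:ℝ) ^ (ρ-1) * x ^ ρ := by
      rw [← h2r, ← hxx]; ring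
    rw [e2] at e1
    nlinarith [mul_nonneg (mul_nonneg (sub_nonneg.2 h2half) (Real.rpow_nonneg hx0.le ρ)) hGpos.le,
      mul_nonneg (sub_nonneg.2 hyx) hGpos.le]
  rw [harg, Real.norm_eq_abs, Real.norm_eq_abs, abs_of_nonneg (by positivity),
    abs_of_nonneg (by positivity), ← mul_div_assoc, div_le_div_iff₀ hGpos' hGpos, pow_succ]
  nlinarith [mul_le_mul_of_nonneg_left key (pow_nonneg hy k)]

noncomputable def vt (ρ : ℝ) (t : ℝ) : ℝ :=
  ∑' k : ℕ, (-1 : ℝ) ^ k * t ^ (ρ * k + ρ - 1) / Real.Gamma (ρ * k + ρ)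

lemma rpow_split {t ρ c : ℝ} (ht : 0 < t) (k : ℕ) :
    t ^ (ρ * k + c) = (t ^ ρ) ^ k * t ^ c := by
  rw [Real.rpow_add ht, Real.rpow_mul ht.le, Real.rpow_natCast]

lemma gamma_arg_pos {ρ b : ℝ} (hρ : 0 < ρ) (hb : 0 < b) (k : ℕ) : 0 < ρ * k + b := by positivity

lemma vterm_norm {ρ t : ℝ} (hρ : 0 < ρ) (ht : 0 < t) (k : ℕ) :
    ‖(-1 : ℝ) ^ k * t ^ (ρ * k + ρ - 1) / Real.Gamma (ρ * k + ρ)‖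
      = t ^ (ρ - 1) * ((t ^ ρ) ^ k / Real.Gamma (ρ * k + ρ)) := by
  have hG := Real.Gamma_pos_of_pos (gamma_arg_pos hρ hρ k)
  rw [norm_div, norm_mul, norm_pow, norm_neg, norm_one, one_pow, one_mul,
    Real.norm_eq_abs, Real.norm_eq_abs, abs_of_pos hG,
    abs_of_pos (Real.rpow_pos_of_pos ht _), show ρ * k + ρ - 1 = ρ * k + (ρ - 1) by ring,
    rpow_split ht]
  ring

lemma vt_summable_norm {ρ t : ℝ} (hρ : 0 < ρ) (hρ1 : ρ ≤ 1) (ht : 0 < t) :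
    Summable (fun k : ℕ => ‖(-1 : ℝ) ^ k * t ^ (ρ * k + ρ - 1) / Real.Gamma (ρ * k + ρ)‖) := by
  have := (summable_gamma_ser hρ hρ1 hρ (le_of_lt (Real.rpow_pos_of_pos ht ρ))).mul_left
    (t ^ (ρ - 1))
  exact this.congr fun k => (vterm_norm hρ ht k).symm

lemma vt_summable {ρ t : ℝ} (hρ : 0 < ρ) (hρ1 : ρ ≤ 1) (ht : 0 < t) :
    Summable (fun k : ℕ => (-1 : ℝ) ^ k * t ^ (ρ * k + ρ - 1) / Real.Gamma (ρ * k + ρ)) :=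
  (vt_summable_norm hρ hρ1 ht).of_norm

lemma vt_continuousAt {ρ t₀ : ℝ} (hρ : 0 < ρ) (hρ1 : ρ ≤ 1) (ht : 0 < t₀) :
    ContinuousAt (vt ρ) t₀ := by
  set s : Set ℝ := Icc (t₀/2) (2*t₀) with hs
  have hsub : ∀ t ∈ s, 0 < t := fun t htm => lt_of_lt_of_le (by linarith) htm.1
  have hM : Summable (fun k : ℕ => (t₀/2) ^ (ρ-1) * (((2*t₀) ^ ρ) ^ k / Real.Gamma (ρ * k + ρ))) :=
    (summable_gamma_ser hρ hρ1 hρ (le_of_lt (Real.rpow_pos_of_pos (by linarith) ρ))).mul_left _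
  have hb : ∀ (k : ℕ), ∀ t ∈ s, ‖(-1 : ℝ) ^ k * t ^ (ρ * k + ρ - 1) / Real.Gamma (ρ * k + ρ)‖
      ≤ (t₀/2) ^ (ρ-1) * (((2*t₀) ^ ρ) ^ k / Real.Gamma (ρ * k + ρ)) := by
    intro k t htm
    have ht' : 0 < t := hsub t htm
    rw [vterm_norm hρ ht']
    have hG := Real.Gamma_pos_of_pos (gamma_arg_pos hρ hρ k)
    have h1 : t ^ (ρ-1) ≤ (t₀/2) ^ (ρ-1) :=
      Real.rpow_le_rpow_of_nonpos (by linarith) htm.1 (by linarith)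
    have h2 : (t ^ ρ) ^ k ≤ ((2*t₀) ^ ρ) ^ k := by
      apply pow_le_pow_left₀ (le_of_lt (Real.rpow_pos_of_pos ht' ρ))
      exact Real.rpow_le_rpow ht'.le htm.2 hρ.le
    have hnn : (0:ℝ) ≤ t ^ (ρ - 1) := (Real.rpow_pos_of_pos ht' _).le
    gcongr
  have huni := tendstoUniformlyOn_tsum hM hb
  have hcont : ∀ N : Finset ℕ, ContinuousOn
      (fun t => ∑ k ∈ N, (-1 : ℝ) ^ k * t ^ (ρ * k + ρ - 1) / Real.Gamma (ρ * k + ρ)) s := by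
    intro N
    apply continuousOn_finset_sum
    intro k _
    apply ContinuousOn.div_const
    apply ContinuousOn.mul continuousOn_const
    apply ContinuousOn.rpow_const continuousOn_id
    intro x hx
    exact Or.inl (ne_of_gt (hsub x hx))
  have hcs : ContinuousOn (vt ρ) s :=
    huni.continuousOn (Filter.Frequently.of_forall hcont)
  exact hcs.continuousAt (Icc_mem_nhds (by linarith) (by linarith))


lemma vt_pos_near_zero {ρ : ℝ} (hρ : 0 < ρ) (hρ1 : ρ ≤ 1) :
    ∃ t₁ : ℝ, 0 < t₁ ∧ ∀ t : ℝ, 0 < t → t ≤ t₁ → 0 < vt ρ t := by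
  have hGρ : 0 < Real.Gamma ρ := Real.Gamma_pos_of_pos hρ
  have hCsum : Summable (fun k : ℕ => (1:ℝ) ^ k / Real.Gamma (ρ * k + 2*ρ)) :=
    summable_gamma_ser hρ hρ1 (by linarith) zero_le_one
  set C : ℝ := ∑' k : ℕ, (1:ℝ) ^ k / Real.Gamma (ρ * k + 2*ρ) with hC
  have hC0 : 0 ≤ C := tsum_nonneg fun k =>
    div_nonneg (by positivity) (Real.Gamma_pos_of_pos (by positivity)).le
  set δ : ℝ := min 1 (1/(C * Real.Gamma ρ + 1)) with hδ
  have hδ0 : 0 < δ := lt_min one_pos (by positivity)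
  have hδ1 : δ ≤ 1 := min_le_left _ _
  refine ⟨δ ^ (1/ρ), Real.rpow_pos_of_pos hδ0 _, fun t ht htle => ?_⟩
  have hyδ : t ^ ρ ≤ δ := by
    have := Real.rpow_le_rpow ht.le htle hρ.le
    rwa [← Real.rpow_mul hδ0.le, one_div, inv_mul_cancel₀ (ne_of_gt hρ), Real.rpow_one] at this
  have hy0 : 0 < t ^ ρ := Real.rpow_pos_of_pos ht _
  have hy1 : t ^ ρ ≤ 1 := le_trans hyδ hδ1
  have hsum := vt_summable hρ hρ1 ht
  have hsumn := vt_summable_norm hρ hρ1 ht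
  have hdecomp := Summable.tsum_eq_zero_add hsum
  have hf0 : (-1 : ℝ) ^ (0:ℕ) * t ^ (ρ * (0:ℕ) + ρ - 1) / Real.Gamma (ρ * (0:ℕ) + ρ)
      = t ^ (ρ - 1) / Real.Gamma ρ := by norm_num
  have htail : |∑' k : ℕ, (-1 : ℝ) ^ (k+1) * t ^ (ρ * (k+1:ℕ) + ρ - 1) / Real.Gamma (ρ * (k+1:ℕ) + ρ)|
      ≤ t ^ (ρ-1) * (t ^ ρ) * C := by
    have hsumn' : Summable (fun k : ℕ =>
        ‖(-1 : ℝ) ^ (k+1) * t ^ (ρ * (k+1:ℕ) + ρ - 1) / Real.Gamma (ρ * (k+1:ℕ) + ρ)‖) := by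
      exact_mod_cast (summable_nat_add_iff 1).2 hsumn
    have hn := norm_tsum_le_tsum_norm hsumn'
    rw [Real.norm_eq_abs] at hn
    refine le_trans hn ?_
    have hbd : ∀ k : ℕ, ‖(-1 : ℝ) ^ (k+1) * t ^ (ρ * (k+1:ℕ) + ρ - 1) / Real.Gamma (ρ * (k+1:ℕ) + ρ)‖
        ≤ t ^ (ρ-1) * (t ^ ρ) * ((1:ℝ) ^ k / Real.Gamma (ρ * k + 2*ρ)) := by
      intro k
      rw [vterm_norm hρ ht (k+1)]
      have harg : ρ * ((k+1:ℕ):ℝ) + ρ = ρ * k + 2*ρ := by push_cast; ring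
      rw [harg, pow_succ']
      have hG2 : 0 < Real.Gamma (ρ * k + 2*ρ) := Real.Gamma_pos_of_pos (by positivity)
      have hpow : (t ^ ρ) ^ k ≤ 1 := pow_le_one₀ hy0.le hy1
      have h1 : t ^ ρ * (t ^ ρ) ^ k / Real.Gamma (ρ * k + 2*ρ)
          ≤ t ^ ρ * (1 / Real.Gamma (ρ * k + 2*ρ)) := by
        rw [mul_div_assoc]
        gcongr
      calc t ^ (ρ-1) * (t ^ ρ * (t ^ ρ) ^ k / Real.Gamma (ρ * k + 2*ρ))
          ≤ t ^ (ρ-1) * (t ^ ρ * (1 / Real.Gamma (ρ * k + 2*ρ))) := by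
            apply mul_le_mul_of_nonneg_left h1 (Real.rpow_pos_of_pos ht _).le
        _ = t ^ (ρ-1) * (t ^ ρ) * ((1:ℝ) ^ k / Real.Gamma (ρ * k + 2*ρ)) := by
            rw [one_pow]; ring
    calc ∑' k : ℕ, ‖(-1 : ℝ) ^ (k+1) * t ^ (ρ * (k+1:ℕ) + ρ - 1) / Real.Gamma (ρ * (k+1:ℕ) + ρ)‖
        ≤ ∑' k : ℕ, t ^ (ρ-1) * (t ^ ρ) * ((1:ℝ) ^ k / Real.Gamma (ρ * k + 2*ρ)) :=
          Summable.tsum_le_tsum hbd hsumn' (hCsum.mul_left _)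
      _ = t ^ (ρ-1) * (t ^ ρ) * C := by rw [tsum_mul_left]
  have hρ1' : 0 < t ^ (ρ - 1) := Real.rpow_pos_of_pos ht _
  have hkey : t ^ (ρ-1) * (t ^ ρ) * C < t ^ (ρ-1) / Real.Gamma ρ := by
    have hδC : δ * C * Real.Gamma ρ < 1 := by
      have h1 : δ ≤ 1/(C * Real.Gamma ρ + 1) := min_le_right _ _
      have h2 : δ * C * Real.Gamma ρ ≤ (1/(C * Real.Gamma ρ + 1)) * C * Real.Gamma ρ := by
        apply mul_le_mul_of_nonneg_right (mul_le_mul_of_nonneg_right h1 hC0) hGρ.le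
      have h3 : (1/(C * Real.Gamma ρ + 1)) * C * Real.Gamma ρ < 1 := by
        rw [div_mul_eq_mul_div, div_mul_eq_mul_div, div_lt_one (by positivity)]
        nlinarith
      linarith
    rw [div_eq_mul_inv]
    have h4 : t ^ ρ * C < (Real.Gamma ρ)⁻¹ := by
      have h6 : t ^ ρ * C ≤ δ * C := mul_le_mul_of_nonneg_right hyδ hC0
      have h5 : δ * C < (Real.Gamma ρ)⁻¹ := by
        rw [← one_div, lt_div_iff₀ hGρ]
        linarith
      linarith
    calc t ^ (ρ-1) * (t ^ ρ) * C = t ^ (ρ-1) * (t ^ ρ * C) := by ring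
      _ < t ^ (ρ-1) * (Real.Gamma ρ)⁻¹ := by
          apply mul_lt_mul_of_pos_left h4 hρ1'
  have : 0 < t ^ (ρ - 1) / Real.Gamma ρ - t ^ (ρ-1) * (t ^ ρ) * C := by linarith
  rw [vt, hdecomp, hf0]
  push_cast at htail ⊢
  have habs := abs_le.1 htail
  linarith [habs.1]

lemma Ibeta {a b t : ℝ} (ha : 0 < a) (hb : 0 < b) (ht : 0 < t) :
    ∫ s in (0:ℝ)..t, s ^ (a-1) * (t-s) ^ (b-1)
      = Real.Gamma a * Real.Gamma b / Real.Gamma (a+b) * t ^ (a+b-1) := by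
  have hGab : Real.Gamma (a+b) ≠ 0 := ne_of_gt (Real.Gamma_pos_of_pos (by linarith))
  -- complex beta value
  have hBc : Complex.betaIntegral a b
      = ((Real.Gamma a * Real.Gamma b / Real.Gamma (a+b) : ℝ) : ℂ) := by
    have h := Complex.Gamma_mul_Gamma_eq_betaIntegral
      (show 0 < (a:ℂ).re by simpa using ha) (show 0 < (b:ℂ).re by simpa using hb)
    have hab : ((a:ℂ) + b) = ((a+b : ℝ) : ℂ) := by push_cast; ring
    rw [hab, Complex.Gamma_ofReal, Complex.Gamma_ofReal, Complex.Gamma_ofReal] at h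
    have hG : ((Real.Gamma (a+b) : ℝ) : ℂ) ≠ 0 := by exact_mod_cast hGab
    rw [Complex.ofReal_div, Complex.ofReal_mul, eq_div_iff hG]
    linear_combination (-1 : ℂ) * h
  have hsc := Complex.betaIntegral_scaled (a:ℂ) (b:ℂ) ht
  -- convert LHS
  have hL : (∫ x in (0:ℝ)..t, (x:ℂ) ^ ((a:ℂ) - 1) * ((t:ℂ) - (x:ℂ)) ^ ((b:ℂ) - 1))
      = ((∫ s in (0:ℝ)..t, s ^ (a-1) * (t-s) ^ (b-1) : ℝ) : ℂ) := by
    rw [← intervalIntegral.integral_ofReal]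
    apply intervalIntegral.integral_congr
    intro x hx
    rw [uIcc_of_le ht.le] at hx
    have hx0 : 0 ≤ x := hx.1
    have htx : 0 ≤ t - x := by linarith [hx.2]
    show (x:ℂ) ^ ((a:ℂ)-1) * ((t:ℂ)-(x:ℂ)) ^ ((b:ℂ)-1) = ((x ^ (a-1) * (t-x) ^ (b-1) : ℝ) : ℂ)
    rw [Complex.ofReal_mul, Complex.ofReal_cpow hx0, Complex.ofReal_cpow htx]
    push_cast
    ring
  rw [hL] at hsc
  have hR : ((t:ℂ)) ^ ((a:ℂ) + (b:ℂ) - 1) = ((t ^ (a+b-1) : ℝ) : ℂ) := by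
    rw [Complex.ofReal_cpow ht.le]
    push_cast
    ring_nf
  rw [hR, hBc, ← Complex.ofReal_mul] at hsc
  have := Complex.ofReal_injective hsc
  rw [this]
  ring

lemma integrableOn_rpow_Ioc {c t : ℝ} (hc : -1 < c) (ht : 0 < t) :
    IntegrableOn (fun s : ℝ => s ^ c) (Ioc 0 t) := by
  have h := intervalIntegral.intervalIntegrable_rpow' (a := 0) (b := t) hc
  rwa [intervalIntegrable_iff_integrableOn_Ioc_of_le ht.le] at h

lemma aesm_kernel {a b τ l r : ℝ} (hl : 0 ≤ l) (hr : r ≤ τ) :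
    AEStronglyMeasurable (fun s : ℝ => s ^ a * (τ-s) ^ b) (volume.restrict (Ioc l r)) := by
  rw [← Measure.restrict_congr_set Ioo_ae_eq_Ioc]
  refine ContinuousOn.aestronglyMeasurable ?_ measurableSet_Ioo
  apply continuousOn_of_forall_continuousAt
  intro s hs
  have hs0 : 0 < s := lt_of_le_of_lt hl hs.1
  have hsτ : 0 < τ - s := by have := hs.2; linarith [lt_of_lt_of_le hs.2 hr]
  apply ContinuousAt.mul
  · exact Real.continuousAt_rpow_const _ _ (Or.inl hs0.ne')
  · exact (Real.continuousAt_rpow_const _ _ (Or.inl hsτ.ne')).comp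
      (continuousAt_const.sub continuousAt_id)

lemma integrableOn_beta_kernel {a b t : ℝ} (ha : 0 < a) (hb : 0 < b) (ht : 0 < t) :
    IntegrableOn (fun s : ℝ => s ^ (a-1) * (t-s) ^ (b-1)) (Ioc 0 t) := by
  have hsplit : Ioc (0:ℝ) t = Ioc 0 (t/2) ∪ Ioc (t/2) t := (Ioc_union_Ioc_eq_Ioc (by linarith) (by linarith)).symm
  rw [hsplit]
  apply IntegrableOn.union
  · -- on (0, t/2] : bound by C * s^(a-1)
    set C : ℝ := (t/2) ^ (b-1) + t ^ (b-1) with hCdef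
    apply Integrable.mono' (((integrableOn_rpow_Ioc (by linarith : (-1:ℝ) < a-1)
        (by linarith : (0:ℝ) < t/2)).const_mul C)) (aesm_kernel le_rfl (by linarith))
    rw [ae_restrict_iff' measurableSet_Ioc]
    apply ae_of_all
    intro s hs
    have hs0 : 0 < s := hs.1
    have hts : t/2 ≤ t - s := by linarith [hs.2]
    have hts0 : 0 < t - s := by linarith
    have hb1 : (t-s) ^ (b-1) ≤ C := by
      rcases le_or_gt 1 b with hb' | hb'
      · have : (t-s) ^ (b-1) ≤ t ^ (b-1) :=
          Real.rpow_le_rpow hts0.le (by linarith [hs.1]) (by linarith)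
        have h2 : (0:ℝ) ≤ (t/2) ^ (b-1) := (Real.rpow_pos_of_pos (by linarith) _).le
        rw [hCdef]; linarith
      · have : (t-s) ^ (b-1) ≤ (t/2) ^ (b-1) :=
          Real.rpow_le_rpow_of_nonpos (by linarith) hts (by linarith)
        have h2 : (0:ℝ) ≤ t ^ (b-1) := (Real.rpow_pos_of_pos ht _).le
        rw [hCdef]; linarith
    rw [Real.norm_eq_abs, abs_of_nonneg (by positivity)]
    calc s ^ (a-1) * (t-s) ^ (b-1) ≤ s ^ (a-1) * C :=
          mul_le_mul_of_nonneg_left hb1 (by positivity)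
      _ = C * s ^ (a-1) := by ring
  · -- on (t/2, t] : bound by C' * (t-s)^(b-1)
    set C' : ℝ := (t/2) ^ (a-1) + t ^ (a-1) with hCdef'
    have hbase : IntegrableOn (fun s : ℝ => (t-s) ^ (b-1)) (Ioc (t/2) t) := by
      have h0 := intervalIntegral.intervalIntegrable_rpow' (a := 0) (b := t/2)
        (by linarith : (-1:ℝ) < b-1)
      have h1 := (h0.comp_sub_left t).symm
      have : t - t/2 = t/2 := by ring
      rw [this, sub_zero] at h1
      rwa [intervalIntegrable_iff_integrableOn_Ioc_of_le (by linarith)] at h1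
    apply Integrable.mono' (hbase.const_mul C') (aesm_kernel (by linarith) le_rfl)
    rw [ae_restrict_iff' measurableSet_Ioc]
    apply ae_of_all
    intro s hs
    have hs0 : (0:ℝ) < t/2 := by linarith
    have hs0' : 0 < s := lt_trans hs0 hs.1
    have hts0 : 0 ≤ t - s := by linarith [hs.2]
    have ha1 : s ^ (a-1) ≤ C' := by
      rcases le_or_gt 1 a with ha' | ha'
      · have : s ^ (a-1) ≤ t ^ (a-1) := Real.rpow_le_rpow hs0'.le hs.2 (by linarith)
        have h2 : (0:ℝ) ≤ (t/2) ^ (a-1) := (Real.rpow_pos_of_pos hs0 _).le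
        rw [hCdef']; linarith
      · have : s ^ (a-1) ≤ (t/2) ^ (a-1) :=
          Real.rpow_le_rpow_of_nonpos hs0 hs.1.le (by linarith)
        have h2 : (0:ℝ) ≤ t ^ (a-1) := (Real.rpow_pos_of_pos ht _).le
        rw [hCdef']; linarith
    rw [Real.norm_eq_abs, abs_of_nonneg (by positivity)]
    calc s ^ (a-1) * (t-s) ^ (b-1) ≤ C' * (t-s) ^ (b-1) :=
          mul_le_mul_of_nonneg_right ha1 (by positivity)
      _ = C' * (t-s) ^ (b-1) := rfl

lemma vt_eq {ρ t : ℝ} (hρ : 0 < ρ) (hρ1 : ρ ≤ 1) (ht : 0 < t) :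
    ∫ s in Ioc 0 t, (t-s) ^ (ρ-1) * vt ρ s = t ^ (ρ-1) - Real.Gamma ρ * vt ρ t := by
  have hGρ : 0 < Real.Gamma ρ := Real.Gamma_pos_of_pos hρ
  set F : ℕ → ℝ → ℝ :=
    fun k s => ((-1:ℝ)^k / Real.Gamma (ρ*k+ρ)) * (s ^ (ρ*k+ρ-1) * (t-s) ^ (ρ-1)) with hF
  have hGk : ∀ k : ℕ, 0 < Real.Gamma (ρ*k+ρ) := fun k => Real.Gamma_pos_of_pos (by positivity)
  have hptw : ∀ s ∈ Ioc (0:ℝ) t, (t-s) ^ (ρ-1) * vt ρ s = ∑' k, F k s := by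
    intro s hs
    rw [vt, ← tsum_mul_left]
    congr 1; funext k; rw [hF]; ring
  rw [setIntegral_congr_fun measurableSet_Ioc hptw]
  have hFint : ∀ k : ℕ, Integrable (F k) (volume.restrict (Ioc 0 t)) := fun k =>
    (integrableOn_beta_kernel (by positivity) hρ ht).const_mul _
  have hIval : ∀ k : ℕ, ∫ s in Ioc 0 t, F k s
      = (-1:ℝ)^k * (Real.Gamma ρ * t ^ (ρ*k+ρ+ρ-1) / Real.Gamma (ρ*k+ρ+ρ)) := by
    intro k
    rw [hF]
    simp only []
    rw [MeasureTheory.integral_const_mul, ← intervalIntegral.integral_of_le ht.le,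
      Ibeta (by positivity : (0:ℝ) < ρ*k+ρ) hρ ht]
    have := (hGk k).ne'
    field_simp
  have hnormval : ∀ k : ℕ, ∫ s in Ioc 0 t, ‖F k s‖
      = Real.Gamma ρ * t ^ (ρ*k+ρ+ρ-1) / Real.Gamma (ρ*k+ρ+ρ) := by
    intro k
    have hcongr : ∀ s ∈ Ioc (0:ℝ) t, ‖F k s‖
        = (1 / Real.Gamma (ρ*k+ρ)) * (s ^ (ρ*k+ρ-1) * (t-s) ^ (ρ-1)) := by
      intro s hs
      rw [hF]
      simp only []
      rw [norm_mul, norm_div, norm_pow, norm_neg, norm_one, one_pow, Real.norm_eq_abs,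
        Real.norm_eq_abs, abs_of_pos (hGk k),
        abs_of_nonneg (mul_nonneg (Real.rpow_nonneg hs.1.le _)
          (Real.rpow_nonneg (by linarith [hs.2] : (0:ℝ) ≤ t - s) _))]
    rw [setIntegral_congr_fun measurableSet_Ioc hcongr, MeasureTheory.integral_const_mul,
      ← intervalIntegral.integral_of_le ht.le, Ibeta (by positivity : (0:ℝ) < ρ*k+ρ) hρ ht]
    have := (hGk k).ne'
    field_simp
  have hsumnorm : Summable (fun k : ℕ => ∫ s in Ioc 0 t, ‖F k s‖) := by
    have hser : Summable (fun k : ℕ => (t^ρ) ^ k / Real.Gamma (ρ * k + (ρ+ρ))) :=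
      summable_gamma_ser hρ hρ1 (by linarith) (Real.rpow_pos_of_pos ht ρ).le
    apply Summable.congr ((hser.mul_left (Real.Gamma ρ * t ^ (ρ+ρ-1))))
    intro k
    rw [hnormval k, show ρ*k+ρ+ρ-1 = ρ*k+(ρ+ρ-1) by ring, rpow_split ht,
      show ρ*(k:ℝ)+ρ+ρ = ρ*k+(ρ+ρ) by ring]
    field_simp
  rw [← MeasureTheory.integral_tsum_of_summable_integral_norm hFint hsumnorm]
  rw [tsum_congr hIval]
  -- now handle the RHS
  have hv := Summable.tsum_eq_zero_add (vt_summable hρ hρ1 ht)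
  have h0 : (-1:ℝ)^(0:ℕ) * t ^ (ρ*(0:ℕ)+ρ-1)/Real.Gamma (ρ*(0:ℕ)+ρ) = t^(ρ-1)/Real.Gamma ρ := by
    norm_num
  set S : ℝ := ∑' k : ℕ, (-1:ℝ)^(k+1) * t ^ (ρ*((k+1:ℕ):ℝ)+ρ-1)/Real.Gamma (ρ*((k+1:ℕ):ℝ)+ρ) with hS
  have hvt : vt ρ t = t^(ρ-1)/Real.Gamma ρ + S := by
    rw [show vt ρ t = ∑' k : ℕ, (-1:ℝ)^k * t ^ (ρ*(k:ℝ)+ρ-1)/Real.Gamma (ρ*(k:ℝ)+ρ) from rfl,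
      hv, h0, hS]
  rw [hvt]
  have hrhs : t ^ (ρ-1) - Real.Gamma ρ * (t^(ρ-1)/Real.Gamma ρ + S) = -(Real.Gamma ρ * S) := by
    field_simp
    ring
  rw [hrhs, hS, ← tsum_mul_left, ← tsum_neg]
  apply tsum_congr
  intro k
  push_cast
  rw [show ρ*((k:ℝ)+1)+ρ-1 = ρ*k+ρ+ρ-1 by ring, show ρ*((k:ℝ)+1)+ρ = ρ*k+ρ+ρ by ring, pow_succ]
  ring

lemma vt_abs_le {ρ τ : ℝ} (hρ : 0 < ρ) (hρ1 : ρ ≤ 1) (hτ : 0 < τ) {s : ℝ}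
    (hs0 : 0 < s) (hsτ : s ≤ τ) :
    ‖vt ρ s‖ ≤ s ^ (ρ-1) * ∑' k : ℕ, (τ^ρ) ^ k / Real.Gamma (ρ*k+ρ) := by
  have hBsum : Summable (fun k : ℕ => (τ^ρ) ^ k / Real.Gamma (ρ*k+ρ)) :=
    summable_gamma_ser hρ hρ1 hρ (Real.rpow_pos_of_pos hτ _).le
  refine le_trans (norm_tsum_le_tsum_norm (vt_summable_norm hρ hρ1 hs0)) ?_
  rw [← tsum_mul_left]
  apply Summable.tsum_le_tsum _ (vt_summable_norm hρ hρ1 hs0) (hBsum.mul_left _)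
  intro k
  rw [vterm_norm hρ hs0 k]
  have hG := Real.Gamma_pos_of_pos (gamma_arg_pos hρ hρ k)
  have h2 : (s ^ ρ) ^ k ≤ (τ ^ ρ) ^ k :=
    pow_le_pow_left₀ (Real.rpow_pos_of_pos hs0 _).le (Real.rpow_le_rpow hs0.le hsτ hρ.le) k
  have h3 : (0:ℝ) ≤ s ^ (ρ-1) := (Real.rpow_pos_of_pos hs0 _).le
  gcongr

lemma vt_ker_int {ρ τ : ℝ} (hρ : 0 < ρ) (hρ1 : ρ ≤ 1) (hτ : 0 < τ) :
    IntegrableOn (fun s : ℝ => (τ-s) ^ (ρ-1) * vt ρ s) (Ioc 0 τ) := by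
  set B : ℝ := ∑' k : ℕ, (τ^ρ) ^ k / Real.Gamma (ρ*k+ρ) with hB
  have hB0 : 0 ≤ B := tsum_nonneg fun k => div_nonneg (pow_nonneg (Real.rpow_pos_of_pos hτ _).le _)
    (Real.Gamma_pos_of_pos (gamma_arg_pos hρ hρ k)).le
  have hbase := (integrableOn_beta_kernel hρ hρ hτ).const_mul B
  apply Integrable.mono' hbase
  · -- a.e. strong measurability
    rw [← Measure.restrict_congr_set Ioo_ae_eq_Ioc]
    refine ContinuousOn.aestronglyMeasurable ?_ measurableSet_Ioo
    apply continuousOn_of_forall_continuousAt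
    intro s hs
    apply ContinuousAt.mul
    · exact (Real.continuousAt_rpow_const _ _ (Or.inl (by linarith [hs.2] : τ - s ≠ 0))).comp
        (continuousAt_const.sub continuousAt_id)
    · exact vt_continuousAt hρ hρ1 hs.1
  · rw [ae_restrict_iff' measurableSet_Ioc]
    apply ae_of_all
    intro s hs
    have hts : (0:ℝ) ≤ τ - s := by linarith [hs.2]
    rw [norm_mul, Real.norm_eq_abs (((τ-s)) ^ (ρ-1)), abs_of_nonneg (Real.rpow_nonneg hts _)]
    calc (τ-s) ^ (ρ-1) * ‖vt ρ s‖ ≤ (τ-s) ^ (ρ-1) * (s ^ (ρ-1) * B) :=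
          mul_le_mul_of_nonneg_left (vt_abs_le hρ hρ1 hτ hs.1 hs.2) (Real.rpow_nonneg hts _)
      _ = B * (s ^ (ρ-1) * (τ-s) ^ (ρ-1)) := by ring

theorem vt_pos {ρ : ℝ} (hρ : 0 < ρ) (hρ1 : ρ ≤ 1) : ∀ t : ℝ, 0 < t → 0 < vt ρ t := by
  by_contra hcon
  push_neg at hcon
  obtain ⟨t₀, ht₀, hv₀⟩ := hcon
  obtain ⟨t₁, ht₁, hpos⟩ := vt_pos_near_zero hρ hρ1
  set Z : Set ℝ := {t : ℝ | 0 < t ∧ vt ρ t ≤ 0} with hZ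
  have hZne : Z.Nonempty := ⟨t₀, ht₀, hv₀⟩
  have hlb : ∀ z ∈ Z, t₁ ≤ z := by
    intro z hz
    by_contra hlt
    push_neg at hlt
    exact absurd hz.2 (not_le.2 (hpos z hz.1 hlt.le))
  have hbdd : BddBelow Z := ⟨t₁, hlb⟩
  set τ := sInf Z with hτdef
  have hτ1 : t₁ ≤ τ := le_csInf hZne hlb
  have hτpos : 0 < τ := lt_of_lt_of_le ht₁ hτ1
  have hτlt : ∀ t : ℝ, 0 < t → t < τ → 0 < vt ρ t := by
    intro t ht htτ
    by_contra hle
    push_neg at hle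
    exact absurd (csInf_le hbdd ⟨ht, hle⟩) (not_le.2 htτ)
  have hvτ : vt ρ τ ≤ 0 := by
    by_contra hpos'
    push_neg at hpos'
    have hev : ∀ᶠ x in 𝓝 τ, 0 < vt ρ x := (vt_continuousAt hρ hρ1 hτpos).eventually
      (eventually_gt_nhds hpos')
    obtain ⟨ε, hε, hball⟩ := Metric.eventually_nhds_iff.1 hev
    have hlb2 : ∀ z ∈ Z, τ + ε/2 ≤ z := by
      intro z hz
      by_contra hlt
      push_neg at hlt
      have hzτ : τ ≤ z := csInf_le hbdd hz
      have hdist : dist z τ < ε := by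
        rw [Real.dist_eq, abs_of_nonneg (by linarith)]
        linarith
      exact absurd hz.2 (not_le.2 (hball hdist))
    have := le_csInf hZne hlb2
    rw [← hτdef] at this
    linarith
  -- choose δ
  have hG : 0 < Real.Gamma ρ := Real.Gamma_pos_of_pos hρ
  set δ : ℝ := min (τ/2) ((ρ * Real.Gamma ρ / 4) ^ (1/ρ)) with hδdef
  have hδ0 : 0 < δ := lt_min (by linarith) (Real.rpow_pos_of_pos (by positivity) _)
  have hδτ : δ ≤ τ/2 := min_le_left _ _
  have hδρ : δ ^ ρ ≤ ρ * Real.Gamma ρ / 4 := by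
    have h := Real.rpow_le_rpow hδ0.le (min_le_right (τ/2) _) hρ.le
    rwa [← Real.rpow_mul (by positivity), one_div, inv_mul_cancel₀ hρ.ne', Real.rpow_one] at h
  -- max of vt on [τ-δ, τ]
  have hKcont : ContinuousOn (vt ρ) (Icc (τ-δ) τ) := by
    apply continuousOn_of_forall_continuousAt
    intro x hx
    exact vt_continuousAt hρ hρ1 (by linarith [hx.1] : 0 < x)
  obtain ⟨θ, hθK, hθmax⟩ := isCompact_Icc.exists_isMaxOn (nonempty_Icc.2 (by linarith)) hKcont
  set M : ℝ := vt ρ θ with hM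
  have hwit : vt ρ (τ - δ/2) ≤ M := hθmax (by constructor <;> [linarith; linarith])
  have hMpos : 0 < M :=
    lt_of_lt_of_le (hτlt (τ - δ/2) (by linarith) (by linarith)) hwit
  have hθτ : θ < τ := by
    rcases lt_or_eq_of_le hθK.2 with h | h
    · exact h
    · exfalso; rw [hM, h] at hMpos; linarith
  have hθ0 : 0 < θ := by linarith [hθK.1]
  -- equation at τ and split
  have hEτ := vt_eq hρ hρ1 hτpos
  have hsplitset : Ioc (0:ℝ) τ = Ioo 0 θ ∪ Icc θ τ := by
    ext x
    simp only [mem_Ioc, mem_union, mem_Ioo, mem_Icc]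
    constructor
    · rintro ⟨h1, h2⟩
      rcases lt_or_ge x θ with h | h
      · exact Or.inl ⟨h1, h⟩
      · exact Or.inr ⟨h, h2⟩
    · rintro (⟨h1, h2⟩ | ⟨h1, h2⟩)
      · exact ⟨h1, by linarith⟩
      · exact ⟨by linarith, h2⟩
  have hdisj : Disjoint (Ioo (0:ℝ) θ) (Icc θ τ) := by
    rw [Set.disjoint_left]
    rintro x ⟨_, h2⟩ ⟨h3, _⟩
    linarith
  have hint := vt_ker_int hρ hρ1 hτpos
  have hint1 : IntegrableOn (fun s : ℝ => (τ-s) ^ (ρ-1) * vt ρ s) (Ioo 0 θ) :=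
    hint.mono_set (by rw [hsplitset]; exact subset_union_left)
  have hint2 : IntegrableOn (fun s : ℝ => (τ-s) ^ (ρ-1) * vt ρ s) (Icc θ τ) :=
    hint.mono_set (by rw [hsplitset]; exact subset_union_right)
  have hsplit : ∫ s in Ioc 0 τ, (τ-s) ^ (ρ-1) * vt ρ s
      = (∫ s in Ioo 0 θ, (τ-s) ^ (ρ-1) * vt ρ s) + ∫ s in Icc θ τ, (τ-s) ^ (ρ-1) * vt ρ s := by
    rw [hsplitset]
    exact setIntegral_union hdisj measurableSet_Icc hint1 hint2
  -- piece 1 estimate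
  set c : ℝ := (τ/θ) ^ (ρ-1) with hc
  have hc0 : 0 < c := Real.rpow_pos_of_pos (by positivity) _
  have hP1 : ∫ s in Ioo 0 θ, (τ-s) ^ (ρ-1) * vt ρ s
      ≤ c * (θ ^ (ρ-1) - Real.Gamma ρ * vt ρ θ) := by
    rw [← vt_eq hρ hρ1 hθ0, ← MeasureTheory.integral_const_mul,
      MeasureTheory.integral_Ioc_eq_integral_Ioo]
    apply setIntegral_mono_on
    · exact hint1
    · exact IntegrableOn.mono_set ((vt_ker_int hρ hρ1 hθ0).const_mul c) Ioo_subset_Ioc_self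
    · exact measurableSet_Ioo
    · intro s hs
      have hs0 : 0 < s := hs.1
      have hsθ : s < θ := hs.2
      have hvpos : 0 < vt ρ s := hτlt s hs0 (by linarith)
      have hker : (τ-s) ^ (ρ-1) ≤ c * (θ-s) ^ (ρ-1) := by
        have hmul : c * (θ-s) ^ (ρ-1) = ((τ/θ) * (θ-s)) ^ (ρ-1) :=
          (Real.mul_rpow (div_pos hτpos hθ0).le (by linarith)).symm
        rw [hmul]
        apply Real.rpow_le_rpow_of_nonpos
          (mul_pos (div_pos hτpos hθ0) (by linarith : (0:ℝ) < θ - s)) _ (by linarith)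
        rw [div_mul_eq_mul_div, div_le_iff₀ hθ0]
        nlinarith
      calc (τ-s) ^ (ρ-1) * vt ρ s ≤ (c * (θ-s) ^ (ρ-1)) * vt ρ s :=
            mul_le_mul_of_nonneg_right hker hvpos.le
        _ = c * ((θ-s) ^ (ρ-1) * vt ρ s) := by ring
  -- piece 2 estimate
  have hP2 : ∫ s in Icc θ τ, (τ-s) ^ (ρ-1) * vt ρ s ≤ M * ((τ-θ) ^ ρ / ρ) := by
    have hker_int : IntegrableOn (fun s : ℝ => (τ-s) ^ (ρ-1)) (Icc θ τ) := by
      have h0 := intervalIntegral.intervalIntegrable_rpow' (a := 0) (b := τ-θ)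
        (by linarith : (-1:ℝ) < ρ-1)
      have h1 := (h0.comp_sub_left τ).symm
      rw [sub_zero, show τ - (τ-θ) = θ by ring] at h1
      rw [intervalIntegrable_iff_integrableOn_Ioc_of_le hθτ.le] at h1
      exact (integrableOn_Icc_iff_integrableOn_Ioc (by simp)).2 h1
    have hmono : ∫ s in Icc θ τ, (τ-s) ^ (ρ-1) * vt ρ s
        ≤ ∫ s in Icc θ τ, M * (τ-s) ^ (ρ-1) := by
      apply setIntegral_mono_on hint2 (hker_int.const_mul M) measurableSet_Icc
      intro s hs
      have hsM : vt ρ s ≤ M := hθmax ⟨by linarith [hs.1, hθK.1], hs.2⟩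
      have hker0 : (0:ℝ) ≤ (τ-s) ^ (ρ-1) := Real.rpow_nonneg (by linarith [hs.2]) _
      calc (τ-s) ^ (ρ-1) * vt ρ s ≤ (τ-s) ^ (ρ-1) * M :=
            mul_le_mul_of_nonneg_left hsM hker0
        _ = M * (τ-s) ^ (ρ-1) := by ring
    have hval : ∫ s in Icc θ τ, (τ-s) ^ (ρ-1) = (τ-θ) ^ ρ / ρ := by
      rw [MeasureTheory.integral_Icc_eq_integral_Ioc, ← intervalIntegral.integral_of_le hθτ.le,
        intervalIntegral.integral_comp_sub_left (fun x => x ^ (ρ-1)) τ,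
        show τ - τ = 0 by ring,
        integral_rpow (Or.inl (by linarith : (-1:ℝ) < ρ-1))]
      rw [Real.zero_rpow (by linarith : ρ - 1 + 1 ≠ 0), show ρ - 1 + 1 = ρ by ring]
      ring
    rw [MeasureTheory.integral_const_mul, hval] at hmono
    exact hmono
  -- assemble
  have hEτ' : τ ^ (ρ-1) ≤ (∫ s in Ioo 0 θ, (τ-s) ^ (ρ-1) * vt ρ s)
      + ∫ s in Icc θ τ, (τ-s) ^ (ρ-1) * vt ρ s := by
    rw [← hsplit, hEτ]
    nlinarith [mul_nonpos_of_nonneg_of_nonpos hG.le hvτ]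
  have hcθ : c * θ ^ (ρ-1) = τ ^ (ρ-1) := by
    rw [hc, ← Real.mul_rpow (by positivity) hθ0.le, div_mul_cancel₀ _ hθ0.ne']
  have hkey : c * Real.Gamma ρ * M ≤ M * ((τ-θ) ^ ρ / ρ) := by
    have := le_trans hEτ' (add_le_add hP1 hP2)
    rw [mul_sub, hcθ] at this
    linarith
  -- lower bound on c and upper bound on (τ-θ)^ρ
  have hc_half : (1/2 : ℝ) ≤ c := by
    have hτθ2 : τ/θ ≤ 2 := by
      rw [div_le_iff₀ hθ0]
      linarith [hθK.1]
    have h2 : (2:ℝ) ^ (ρ-1) ≤ c := by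
      rw [hc]
      exact Real.rpow_le_rpow_of_nonpos (by positivity) hτθ2 (by linarith)
    have h3 : (1/2:ℝ) ≤ (2:ℝ) ^ (ρ-1) := by
      have h := Real.rpow_le_rpow_of_exponent_le (by norm_num : (1:ℝ) ≤ 2)
        (by linarith : (-1:ℝ) ≤ ρ - 1)
      rw [Real.rpow_neg_one] at h
      linarith
    linarith
  have hτθδ : (τ-θ) ^ ρ ≤ ρ * Real.Gamma ρ / 4 := by
    refine le_trans ?_ hδρ
    apply Real.rpow_le_rpow (by linarith) (by linarith [hθK.1]) hρ.le
  -- contradiction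
  have h1 : (1/2) * Real.Gamma ρ * M ≤ c * Real.Gamma ρ * M :=
    mul_le_mul_of_nonneg_right (mul_le_mul_of_nonneg_right hc_half hG.le) hMpos.le
  have h2 : (τ-θ) ^ ρ / ρ ≤ Real.Gamma ρ / 4 := by
    rw [div_le_iff₀ hρ]
    calc (τ-θ) ^ ρ ≤ ρ * Real.Gamma ρ / 4 := hτθδ
      _ = Real.Gamma ρ / 4 * ρ := by ring
  have h3 : M * ((τ-θ) ^ ρ / ρ) ≤ M * (Real.Gamma ρ / 4) :=
    mul_le_mul_of_nonneg_left h2 hMpos.le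
  nlinarith [mul_pos hG hMpos]

/-- The Mittag-Leffler function `E_ρ(z) = ∑_{k=0}^∞ z^k / Γ(ρk + 1)`. -/
noncomputable def mittagLeffler (ρ z : ℝ) : ℝ := ∑' k : ℕ, z ^ k / Real.Gamma (ρ * k + 1)

lemma ml_summable {ρ : ℝ} (hρ : 0 < ρ) (hρ1 : ρ ≤ 1) (x : ℝ) :
    Summable (fun k : ℕ => x ^ k / Real.Gamma (ρ * k + 1)) := by
  apply Summable.of_norm
  apply (summable_gamma_ser hρ hρ1 one_pos (abs_nonneg x)).congr
  intro k
  rw [norm_div, norm_pow, Real.norm_eq_abs, Real.norm_eq_abs,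
    abs_of_pos (Real.Gamma_pos_of_pos (gamma_arg_pos hρ one_pos k))]

lemma ml_strict {ρ x₁ x₂ : ℝ} (hρ : 0 < ρ) (hρ1 : ρ ≤ 1) (h1 : 0 < x₁) (h12 : x₁ < x₂) :
    mittagLeffler ρ (-x₂) < mittagLeffler ρ (-x₁) := by
  have h2 : 0 < x₂ := lt_trans h1 h12
  set t₁ : ℝ := x₁ ^ (1/ρ) with ht₁def
  set t₂ : ℝ := x₂ ^ (1/ρ) with ht₂def
  have ht₁ : 0 < t₁ := Real.rpow_pos_of_pos h1 _
  have ht₂ : 0 < t₂ := Real.rpow_pos_of_pos h2 _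
  have ht12 : t₁ < t₂ := Real.rpow_lt_rpow h1.le h12 (by positivity)
  have htpow : ∀ x : ℝ, 0 < x → (x ^ (1/ρ)) ^ ρ = x := by
    intro x hx
    rw [← Real.rpow_mul hx.le, one_div, inv_mul_cancel₀ hρ.ne', Real.rpow_one]
  have hGk : ∀ k : ℕ, 0 < Real.Gamma (ρ*k+ρ) := fun k => Real.Gamma_pos_of_pos (by positivity)
  have hek : ∀ k : ℕ, (0:ℝ) < ρ*k+ρ := fun k => by positivity
  -- the integral of vt over (t₁, t₂]
  have hFint : ∀ k : ℕ, Integrable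
      (fun s : ℝ => (-1:ℝ)^k * s ^ (ρ*k+ρ-1) / Real.Gamma (ρ*k+ρ))
      (volume.restrict (Ioc t₁ t₂)) := by
    intro k
    have hbase : IntegrableOn (fun s : ℝ => s ^ (ρ*k+ρ-1)) (Ioc t₁ t₂) :=
      (integrableOn_rpow_Ioc (by nlinarith [hek k] : (-1:ℝ) < ρ*k+ρ-1) ht₂).mono_set
        (Ioc_subset_Ioc ht₁.le le_rfl)
    exact (hbase.const_mul ((-1:ℝ)^k / Real.Gamma (ρ*k+ρ))).congr
      (ae_of_all _ fun s => by ring)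
  have hnorm_sum : Summable (fun k : ℕ => ∫ s in Ioc t₁ t₂,
      ‖(-1:ℝ)^k * s ^ (ρ*k+ρ-1) / Real.Gamma (ρ*k+ρ)‖) := by
    set D : ℕ → ℝ := fun k => t₁ ^ (ρ-1) * ((t₂^ρ) ^ k / Real.Gamma (ρ*k+ρ)) with hD
    have hDsum : Summable (fun k : ℕ => (t₂ - t₁) * D k) := by
      apply Summable.mul_left
      exact (summable_gamma_ser hρ hρ1 hρ (Real.rpow_pos_of_pos ht₂ _).le).mul_left _
    apply Summable.of_nonneg_of_le
      (fun k => integral_nonneg fun s => norm_nonneg _) _ hDsum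
    intro k
    have hbd : ∀ s ∈ Ioc t₁ t₂, ‖(-1:ℝ)^k * s ^ (ρ*k+ρ-1) / Real.Gamma (ρ*k+ρ)‖ ≤ D k := by
      intro s hs
      have hs0 : 0 < s := lt_trans ht₁ hs.1
      rw [vterm_norm hρ hs0 k]
      simp only [hD]
      have hA : s ^ (ρ-1) ≤ t₁ ^ (ρ-1) :=
        Real.rpow_le_rpow_of_nonpos ht₁ hs.1.le (by linarith)
      have hB : (s^ρ) ^ k ≤ (t₂^ρ) ^ k :=
        pow_le_pow_left₀ (Real.rpow_pos_of_pos hs0 _).le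
          (Real.rpow_le_rpow hs0.le hs.2 hρ.le) k
      have h3 : (0:ℝ) ≤ s ^ (ρ-1) := (Real.rpow_pos_of_pos hs0 _).le
      gcongr
    calc ∫ s in Ioc t₁ t₂, ‖(-1:ℝ)^k * s ^ (ρ*k+ρ-1) / Real.Gamma (ρ*k+ρ)‖
        ≤ ∫ _s in Ioc t₁ t₂, D k := by
          apply setIntegral_mono_on (hFint k).norm (integrableOn_const (by
            rw [Real.volume_Ioc]; exact ENNReal.ofReal_ne_top)) measurableSet_Ioc hbd
      _ = (t₂ - t₁) * D k := by
          rw [setIntegral_const, Real.volume_real_Ioc_of_le (by linarith), smul_eq_mul]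
  have hIval : ∀ k : ℕ, (∫ s in Ioc t₁ t₂, (-1:ℝ)^k * s ^ (ρ*k+ρ-1) / Real.Gamma (ρ*k+ρ))
      = ((-x₁) ^ (k+1) - (-x₂) ^ (k+1)) / Real.Gamma (ρ*(k+1:ℕ)+1) := by
    intro k
    have hint : ∀ s : ℝ, (-1:ℝ)^k * s ^ (ρ*k+ρ-1) / Real.Gamma (ρ*k+ρ)
        = ((-1:ℝ)^k / Real.Gamma (ρ*k+ρ)) * s ^ (ρ*k+ρ-1) := fun s => by ring
    rw [setIntegral_congr_fun measurableSet_Ioc (fun s _ => hint s),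
      MeasureTheory.integral_const_mul, ← intervalIntegral.integral_of_le ht12.le,
      integral_rpow (Or.inl (by nlinarith [hek k] : (-1:ℝ) < ρ*k+ρ-1))]
    rw [show ρ*(k:ℝ)+ρ-1+1 = ρ*k+ρ by ring]
    have hGadd : Real.Gamma (ρ*((k:ℝ)+1)+1) = (ρ*k+ρ) * Real.Gamma (ρ*k+ρ) := by
      rw [show ρ*((k:ℝ)+1)+1 = (ρ*k+ρ)+1 by ring, Real.Gamma_add_one (hek k).ne']
    have ht₂x : t₂ ^ (ρ*(k:ℝ)+ρ) = x₂ ^ (k+1) := by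
      rw [rpow_split ht₂, ht₂def, htpow x₂ h2]
      exact (pow_succ x₂ k).symm
    have ht₁x : t₁ ^ (ρ*(k:ℝ)+ρ) = x₁ ^ (k+1) := by
      rw [rpow_split ht₁, ht₁def, htpow x₁ h1]
      exact (pow_succ x₁ k).symm
    push_cast
    rw [ht₂x, ht₁x, hGadd, neg_pow, neg_pow, pow_succ]
    have hGne := (hGk k).ne'
    have hene := (hek k).ne'
    field_simp
    ring
  have hiv := MeasureTheory.integral_tsum_of_summable_integral_norm hFint hnorm_sum
  have hIv2 : ∫ s in Ioc t₁ t₂, vt ρ s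
      = ∑' k : ℕ, ((-x₁) ^ (k+1) - (-x₂) ^ (k+1)) / Real.Gamma (ρ*(k+1:ℕ)+1) := by
    rw [show (∫ s in Ioc t₁ t₂, vt ρ s)
        = ∫ s in Ioc t₁ t₂, ∑' k : ℕ, (-1:ℝ)^k * s^(ρ*k+ρ-1)/Real.Gamma (ρ*k+ρ) from rfl,
      ← hiv]
    exact tsum_congr hIval
  have hsum1 := ml_summable hρ hρ1 (-x₁)
  have hsum2 := ml_summable hρ hρ1 (-x₂)
  have hdiff : mittagLeffler ρ (-x₁) - mittagLeffler ρ (-x₂)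
      = ∑' k : ℕ, ((-x₁) ^ (k+1) - (-x₂) ^ (k+1)) / Real.Gamma (ρ*(k+1:ℕ)+1) := by
    rw [mittagLeffler, mittagLeffler, ← Summable.tsum_sub hsum1 hsum2]
    have hc : ∀ k : ℕ, (-x₁)^k/Real.Gamma (ρ*k+1) - (-x₂)^k/Real.Gamma (ρ*k+1)
        = ((-x₁)^k - (-x₂)^k)/Real.Gamma (ρ*k+1) := fun k => (sub_div _ _ _).symm
    rw [tsum_congr hc]
    have hsub : Summable (fun k : ℕ => ((-x₁)^k - (-x₂)^k)/Real.Gamma (ρ*k+1)) := by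
      apply Summable.congr (hsum1.sub hsum2)
      intro k
      exact (sub_div _ _ _).symm
    rw [Summable.tsum_eq_zero_add hsub]
    norm_num
  have hpos : 0 < ∫ s in Ioc t₁ t₂, vt ρ s := by
    rw [← intervalIntegral.integral_of_le ht12.le]
    apply intervalIntegral.intervalIntegral_pos_of_pos_on
    · apply ContinuousOn.intervalIntegrable
      rw [uIcc_of_le ht12.le]
      apply continuousOn_of_forall_continuousAt
      intro x hx
      exact vt_continuousAt hρ hρ1 (lt_of_lt_of_le ht₁ hx.1)
    · intro x hx
      exact vt_pos hρ hρ1 x (lt_trans ht₁ hx.1)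
    · exact ht12
  rw [hIv2] at hpos
  rw [← hdiff] at hpos
  linarith

/-- For `ρ ∈ (0,1)`, `σ₀ ∈ (0,1)`, `t₀ > 1` and `λ₁ > 1` with `λ₁^{σ₀} ≥ 5Γ(1−ρ)`, for
every `σ ∈ [σ₀, 1)` one has `E_ρ(−λ₁ t₀^ρ) < E_ρ(−λ₁^σ t₀^ρ) < E_ρ(−t₀^ρ)`. -/
theorem stmt11 (ρ σ₀ t₀ lam₁ : ℝ) (hρ : 0 < ρ) (hρ' : ρ < 1) (hσ₀ : 0 < σ₀) (hσ₀' : σ₀ < 1)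
    (ht₀ : 1 < t₀) (hlam₁ : 1 < lam₁) (h : 5 * Real.Gamma (1 - ρ) ≤ lam₁ ^ σ₀) :
    ∀ σ ∈ Set.Ico σ₀ 1,
      mittagLeffler ρ (-(lam₁ * t₀ ^ ρ)) < mittagLeffler ρ (-(lam₁ ^ σ * t₀ ^ ρ)) ∧
      mittagLeffler ρ (-(lam₁ ^ σ * t₀ ^ ρ)) < mittagLeffler ρ (-(t₀ ^ ρ)) := by
  intro σ hσ
  have hρ1 : ρ ≤ 1 := hρ'.le
  have hσpos : 0 < σ := lt_of_lt_of_le hσ₀ hσ.1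
  have ht₀ρ : 0 < t₀ ^ ρ := Real.rpow_pos_of_pos (by linarith) _
  have hlampos : (0:ℝ) < lam₁ := by linarith
  have hlamσ : 1 < lam₁ ^ σ :=
    (Real.one_lt_rpow_iff_of_pos hlampos).2 (Or.inl ⟨hlam₁, hσpos⟩)
  have hlt2 : lam₁ ^ σ < lam₁ := by
    calc lam₁ ^ σ < lam₁ ^ (1:ℝ) := Real.rpow_lt_rpow_of_exponent_lt hlam₁ hσ.2
      _ = lam₁ := Real.rpow_one _
  constructor
  · exact ml_strict hρ hρ1 (by positivity) (mul_lt_mul_of_pos_right hlt2 ht₀ρ)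
  · have hx : t₀ ^ ρ < lam₁ ^ σ * t₀ ^ ρ := by
      nth_rewrite 1 [← one_mul (t₀ ^ ρ)]
      exact mul_lt_mul_of_pos_right hlamσ ht₀ρ
    exact ml_strict hρ hρ1 ht₀ρ hx
end
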